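/- For the self-adaptive SIS model on the cycle, with R = β/γ > 2, the equilibrium x₂* = (1 + √(1 - 2/R))/2 satisfies f'(x₂*) < 0 and the equilibrium x₁* = (1 - √(1 - 2/R))/2 satisfies f'(x₁*) > 0, where f(x) = -2βx³ + 2βx² - γx; hence x₂* is stable and x₁* is unstable. -/

import Mathlib

/-- For the self-adaptive SIS model on the cycle with `R = β/γ > 2`, the
equilibrium `x₂* = (1+√(1-2/R))/2` is stable (`f'(x₂*) < 0`) and the
equilibrium `x₁* = (1-√(1-2/R))/2` is unstable (`f'(x₁*) > 0`). -/
theorem cycle_ASIS_stability (β γ : ℝ) (hβ : 0 < β) (hγ : 0 < γ)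
    (hR : β / γ > 2) :
    let R : ℝ := β / γ
    let f : ℝ → ℝ := fun x => -2 * β * x ^ 3 + 2 * β * x ^ 2 - γ * x
    deriv f ((1 + Real.sqrt (1 - 2 / R)) / 2) < 0 ∧
      deriv f ((1 - Real.sqrt (1 - 2 / R)) / 2) > 0 := by
  intro R f
  have hd : ∀ x : ℝ, HasDerivAt f (-6 * β * x ^ 2 + 4 * β * x - γ) x := by
    intro x
    have h := (((hasDerivAt_pow 3 x).const_mul (-2 * β)).add
        ((hasDerivAt_pow 2 x).const_mul (2 * β))).sub
        ((hasDerivAt_id x).const_mul γ)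
    refine h.congr_deriv ?_
    ring
  have h2γ : 2 * γ < β := by
    rw [gt_iff_lt, lt_div_iff₀ hγ] at hR
    linarith
  have harg : (1 : ℝ) - 2 / R = 1 - 2 * γ / β := by
    field_simp [R]
    simp only [R]
    field_simp
  set s := Real.sqrt (1 - 2 / R) with hs
  have hs0 : 0 ≤ s := Real.sqrt_nonneg _
  have hs2 : s ^ 2 = 1 - 2 * γ / β := by
    rw [hs, Real.sq_sqrt, harg]
    rw [harg]
    have : 0 < 1 - 2 * γ / β := by
      rw [sub_pos, div_lt_one hβ]; linarith
    linarith
  have hs2' : β * s ^ 2 = β - 2 * γ := by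
    field_simp at hs2 ⊢; linarith
  constructor
  · rw [(hd _).deriv]
    nlinarith [mul_nonneg hβ.le hs0, sq_nonneg s]
  · rw [(hd _).deriv]
    have hkey : β * s > β - 2 * γ := by
      nlinarith [mul_pos hγ (sub_pos.mpr h2γ), mul_nonneg hβ.le hs0,
        sq_nonneg (β * s - (β - 2 * γ))]
    nlinarith
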